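/- If A is a positive linear operator from the real Lᵖ space of a measure space to the real L^q space (1 ≤ p, q ≤ ∞), and A_ℂ is its complex-linear extension, then |A_ℂ(f + ig)| ≤ A(|f + ig|) almost everywhere, for all f, g in real Lᵖ. -/

import Mathlib

open MeasureTheory Filter Complex

lemma ptwise_cos_sin_le (θ a b : ℝ) :
    Real.cos θ * a + Real.sin θ * b ≤ ‖(↑a + ↑b * Complex.I : ℂ)‖ := by
  rw [Complex.norm_add_mul_I]
  have h1 : Real.sqrt (a ^ 2 + b ^ 2) ^ 2 = a ^ 2 + b ^ 2 :=
    Real.sq_sqrt (by positivity)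
  have h2 : 0 ≤ Real.sqrt (a ^ 2 + b ^ 2) := Real.sqrt_nonneg _
  have h3 : Real.sin θ ^ 2 + Real.cos θ ^ 2 = 1 := Real.sin_sq_add_cos_sq θ
  nlinarith [sq_nonneg (Real.cos θ * b - Real.sin θ * a),
    sq_nonneg (Real.sqrt (a ^ 2 + b ^ 2) - (Real.cos θ * a + Real.sin θ * b)),
    sq_nonneg (Real.sqrt (a ^ 2 + b ^ 2) + (Real.cos θ * a + Real.sin θ * b))]

lemma abs_le_of_rat (a b c : ℝ)
    (h : ∀ r : ℚ, Real.cos r * a + Real.sin r * b ≤ c) :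
    ‖(↑a + ↑b * Complex.I : ℂ)‖ ≤ c := by
  have hall : ∀ θ : ℝ, Real.cos θ * a + Real.sin θ * b ≤ c := by
    intro θ
    have hcl : IsClosed {t : ℝ | Real.cos t * a + Real.sin t * b ≤ c} :=
      isClosed_le (by fun_prop) continuous_const
    have hsub : Set.range ((↑) : ℚ → ℝ) ⊆ {t : ℝ | Real.cos t * a + Real.sin t * b ≤ c} := by
      rintro _ ⟨r, rfl⟩; exact h r
    have hdense : Dense (Set.range ((↑) : ℚ → ℝ)) := Rat.denseRange_cast
    have : (Set.univ : Set ℝ) ⊆ {t : ℝ | Real.cos t * a + Real.sin t * b ≤ c} := by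
      rw [← hdense.closure_eq]
      exact closure_minimal hsub hcl
    exact this (Set.mem_univ θ)
  by_cases hz : (↑a + ↑b * Complex.I : ℂ) = 0
  · rw [hz]
    have := hall 0
    simp only [Real.cos_zero, Real.sin_zero, one_mul, zero_mul, add_zero] at this
    have hab : a = 0 := by
      have := congrArg Complex.re hz; simpa using this
    simpa [hab] using this
  · set z : ℂ := ↑a + ↑b * Complex.I with hzdef
    have hre : z.re = a := by simp [hzdef]
    have him : z.im = b := by simp [hzdef]
    have habs : 0 < ‖z‖ := norm_pos_iff.2 hz
    have hsq : a ^ 2 + b ^ 2 = ‖z‖ ^ 2 := by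
      rw [Complex.sq_norm, Complex.normSq_apply, hre, him]; ring
    have key : Real.cos (Complex.arg z) * a + Real.sin (Complex.arg z) * b
        = ‖z‖ := by
      rw [Complex.cos_arg hz, Complex.sin_arg, hre, him]
      field_simp
      nlinarith [hsq]
    calc ‖z‖ = _ := key.symm
      _ ≤ c := hall _

/-- Proposition 5 (first part): if `A` is a positive linear operator from real `Lᵖ`
to real `L^q` and `A_ℂ` its complex extension, then `|A_ℂ(f+ig)| ≤ A(|f+ig|)` a.e. -/
theorem abs_complex_extension_le
    {X : Type*} [MeasurableSpace X] (μ : Measure X) [SigmaFinite μ]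
    (p q : ENNReal) [Fact (1 ≤ p)] [Fact (1 ≤ q)]
    (A : Lp ℝ p μ →L[ℝ] Lp ℝ q μ)
    (hA : ∀ h : Lp ℝ p μ, 0 ≤ h → 0 ≤ A h)
    (f g : Lp ℝ p μ)
    (m : Lp ℝ p μ) (hm : ⇑m =ᵐ[μ] fun x => ‖(↑(f x) + ↑(g x) * Complex.I : ℂ)‖) :
    ∀ᵐ x ∂μ, ‖(↑((A f) x) + ↑((A g) x) * Complex.I : ℂ)‖ ≤ (A m) x := by
  have hr : ∀ r : ℚ, ∀ᵐ x ∂μ,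
      Real.cos r * (A f) x + Real.sin r * (A g) x ≤ (A m) x := by
    intro r
    set h : Lp ℝ p μ := Real.cos r • f + Real.sin r • g with hh
    have hle : h ≤ m := by
      rw [← Lp.coeFn_le h m]
      filter_upwards [Lp.coeFn_add (Real.cos r • f) (Real.sin r • g),
        Lp.coeFn_smul (Real.cos (r : ℝ)) f, Lp.coeFn_smul (Real.sin (r : ℝ)) g, hm]
        with x h1 h2 h3 h4
      rw [hh]
      calc (↑(Real.cos r • f + Real.sin r • g) : X → ℝ) x
          = (Real.cos r • f : Lp ℝ p μ) x + (Real.sin r • g : Lp ℝ p μ) x := h1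
        _ = Real.cos r * f x + Real.sin r * g x := by rw [h2, h3]; rfl
        _ ≤ ‖(↑(f x) + ↑(g x) * Complex.I : ℂ)‖ := ptwise_cos_sin_le _ _ _
        _ = m x := h4.symm
    have hAle : A h ≤ A m := by
      have := hA (m - h) (sub_nonneg.2 hle)
      rw [map_sub] at this
      exact sub_nonneg.1 this
    have hAh : A h = Real.cos r • A f + Real.sin r • A g := by
      rw [hh, map_add, A.map_smul, A.map_smul]
    rw [hAh] at hAle
    filter_upwards [(Lp.coeFn_le _ _).2 hAle, Lp.coeFn_add (Real.cos r • A f) (Real.sin r • A g),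
      Lp.coeFn_smul (Real.cos (r : ℝ)) (A f), Lp.coeFn_smul (Real.sin (r : ℝ)) (A g)]
      with x h1 h2 h3 h4
    calc Real.cos r * (A f) x + Real.sin r * (A g) x
        = (Real.cos r • A f : Lp ℝ q μ) x + (Real.sin r • A g : Lp ℝ q μ) x := by
          rw [h3, h4]; rfl
      _ = (↑(Real.cos r • A f + Real.sin r • A g) : X → ℝ) x := h2.symm
      _ ≤ (A m) x := h1
  have hall : ∀ᵐ x ∂μ, ∀ r : ℚ,
      Real.cos r * (A f) x + Real.sin r * (A g) x ≤ (A m) x := ae_all_iff.2 hr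
  filter_upwards [hall] with x hx
  exact abs_le_of_rat _ _ _ hx
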